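/- Let ℓ_i(x_i) = a_i x_i + b_i, a_i > 0, b_i ≥ 0 on n parallel links with unit demand, and a price cap c ≥ 0. There is at most one pair (t, x) satisfying: (1) a_i x_i + b_i + t_i = K for all i for some constant K; (2) Σ_i x_i = 1; (3) t_i = min{(a_i + 1/(Σ_{j≠i} 1/a_j))·x_i, c} for all i; (4) x_i > 0 for all i. [Uniqueness of the c-capped subgame perfect Nash equilibrium characterization.] -/

import Mathlib

open Finset

lemma capped_aux (n : ℕ) (a b : Fin n → ℝ) (c : ℝ)
    (ha : ∀ i, 0 < a i)
    (x x' : Fin n → ℝ) (K K' : ℝ) (hKK : K ≤ K')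
    (hK : ∀ i, a i * x i + b i + min ((a i + 1 / (∑ j ∈ univ.erase i, 1 / a j)) * x i) c = K)
    (hK' : ∀ i, a i * x' i + b i + min ((a i + 1 / (∑ j ∈ univ.erase i, 1 / a j)) * x' i) c = K')
    (i : Fin n) : x i ≤ x' i := by
  by_contra h
  push_neg at h
  set A := a i + 1 / (∑ j ∈ univ.erase i, 1 / a j) with hA
  have hApos : 0 ≤ A := by
    have : 0 ≤ ∑ j ∈ univ.erase i, 1 / a j :=
      Finset.sum_nonneg fun j _ => one_div_nonneg.mpr (ha j).le
    have : 0 ≤ 1 / (∑ j ∈ univ.erase i, 1 / a j) := one_div_nonneg.mpr this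
    have := (ha i).le
    simp only [hA]; linarith
  have h1 : a i * x' i < a i * x i := by
    exact mul_lt_mul_of_pos_left h (ha i)
  have h2 : min (A * x' i) c ≤ min (A * x i) c :=
    min_le_min (mul_le_mul_of_nonneg_left h.le hApos) le_rfl
  have := hK i
  have := hK' i
  linarith

theorem capped_spe_characterization_unique
    (n : ℕ) (hn : 2 ≤ n) (a b : Fin n → ℝ) (c : ℝ)
    (ha : ∀ i, 0 < a i) (hb : ∀ i, 0 ≤ b i) (hc : 0 ≤ c)
    (t x t' x' : Fin n → ℝ)
    (hK : ∃ K : ℝ, ∀ i, a i * x i + b i + t i = K)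
    (hsum : ∑ i, x i = 1)
    (hformula : ∀ i, t i = min ((a i + 1 / (∑ j ∈ univ.erase i, 1 / a j)) * x i) c)
    (hpos : ∀ i, 0 < x i)
    (hK' : ∃ K : ℝ, ∀ i, a i * x' i + b i + t' i = K)
    (hsum' : ∑ i, x' i = 1)
    (hformula' : ∀ i, t' i = min ((a i + 1 / (∑ j ∈ univ.erase i, 1 / a j)) * x' i) c)
    (hpos' : ∀ i, 0 < x' i) :
    t = t' ∧ x = x' := by
  obtain ⟨K, hKeq⟩ := hK
  obtain ⟨K', hKeq'⟩ := hK'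
  have hKeq2 : ∀ i, a i * x i + b i + min ((a i + 1 / (∑ j ∈ univ.erase i, 1 / a j)) * x i) c = K :=
    fun i => by rw [← hformula i]; exact hKeq i
  have hKeq2' : ∀ i, a i * x' i + b i + min ((a i + 1 / (∑ j ∈ univ.erase i, 1 / a j)) * x' i) c = K' :=
    fun i => by rw [← hformula' i]; exact hKeq' i
  have hxx : x = x' := by
    funext i
    rcases le_total K K' with hle | hle
    · have h1 : ∀ j, x j ≤ x' j := capped_aux n a b c ha x x' K K' hle hKeq2 hKeq2'
      exact (Finset.sum_eq_sum_iff_of_le (fun j _ => h1 j)).mp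
        (by rw [hsum, hsum']) i (Finset.mem_univ i)
    · have h1 : ∀ j, x' j ≤ x j := capped_aux n a b c ha x' x K' K hle hKeq2' hKeq2
      exact ((Finset.sum_eq_sum_iff_of_le (fun j _ => h1 j)).mp
        (by rw [hsum, hsum']) i (Finset.mem_univ i)).symm
  refine ⟨?_, hxx⟩
  funext i
  rw [hformula i, hformula' i, hxx]
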